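/- If c^{h′} ≥ a_s then t_y < s for all y = 0,…,h′−1; and if d^{h} ≥ b_k then t′_x < k for all x = 0,…,h−1. -/

import Mathlib

open Finset
open scoped Classical

noncomputable section

namespace GenMaj

/-- Extended entries of a finite (1-indexed) sequence `x` of length `w`:
`+∞` for indices `≤ 0` and `-∞` for indices `> w`. -/
def ext (w : ℤ) (x : ℤ → ℤ) (i : ℤ) : EReal :=
  if i ≤ 0 then ⊤ else if i ≤ w then ((x i : ℝ) : EReal) else ⊥

/-- `h_j = min { i | d_{i-j+1} < g_i }` (with the above conventions), where `d` has
length `m` and `g` has length `m + s`. -/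
def hIdx (m s : ℤ) (d g : ℤ → ℤ) (j : ℤ) : ℤ :=
  sInf {i : ℤ | ext m d (i - j + 1) < ext (m + s) g i}

/-- Weak generalized majorization `g ≺″ (d, a)`. -/
def WeakMaj (m s : ℤ) (d a g : ℤ → ℤ) : Prop :=
  (∀ i ∈ Finset.Icc (1 : ℤ) m, g (i + s) ≤ d i) ∧
  (∀ j ∈ Finset.Icc (1 : ℤ) s,
      (∑ i ∈ Finset.Icc (hIdx m s d g j - j + 1) m, d i) +
          (∑ i ∈ Finset.Icc (j + 1) s, a i) ≤
        ∑ i ∈ Finset.Icc (hIdx m s d g j + 1) (m + s), g i) ∧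
  ((∑ i ∈ Finset.Icc (1 : ℤ) m, d i) + (∑ i ∈ Finset.Icc (1 : ℤ) s, a i) ≤
      ∑ i ∈ Finset.Icc (1 : ℤ) (m + s), g i)

/-- Generalized majorization `g ≺′ (d, a)`. -/
def GenMajRel (m s : ℤ) (d a g : ℤ → ℤ) : Prop :=
  (∀ i ∈ Finset.Icc (1 : ℤ) m, g (i + s) ≤ d i) ∧
  (∀ j ∈ Finset.Icc (1 : ℤ) s,
      (∑ i ∈ Finset.Icc (1 : ℤ) (hIdx m s d g j), g i) -
          (∑ i ∈ Finset.Icc (1 : ℤ) (hIdx m s d g j - j), d i) ≤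
        ∑ i ∈ Finset.Icc (1 : ℤ) j, a i) ∧
  (∑ i ∈ Finset.Icc (1 : ℤ) (m + s), g i =
      (∑ i ∈ Finset.Icc (1 : ℤ) m, d i) + (∑ i ∈ Finset.Icc (1 : ℤ) s, a i))

/-- The quantity `q_j = s - #{i ∈ S : c_i < d_j} + #{i > j : i ∉ Δ} + 1`. -/
def qd (m s : ℤ) (c d : ℤ → ℤ) (S Δ : Finset ℤ) (j : ℤ) : ℤ :=
  s - ((S.filter (fun i => c i < d j)).card : ℤ) +
      (((Finset.Icc (j + 1) m).filter (fun i => i ∉ Δ)).card : ℤ) + 1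

/-- The quantity `#{i : a_i > c_l} - s + #{i ∈ S : i > l} - #{i ∉ Δ : d_i < c_l} + 1`. -/
def Na (m s : ℤ) (a c d : ℤ → ℤ) (S Δ : Finset ℤ) (l : ℤ) : ℤ :=
  (((Finset.Icc (1 : ℤ) s).filter (fun i => c l < a i)).card : ℤ) - s +
      ((S.filter (fun i => l < i)).card : ℤ) -
      (((Finset.Icc (1 : ℤ) m).filter (fun i => i ∉ Δ ∧ d i < c l)).card : ℤ) + 1

/-- The membership criterion for the set `Δ` at the index `j`:  `j ∈ Δ` unless
`q_j ≤ s` and either (a) for the minimal `l ∈ S` with `d_j > c_l` one has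
`#{i : a_i > c_l} ≥ s - #{i ∈ S : i > l} + #{i ∉ Δ : d_i < c_l}` and `d_j` is among the
smallest `Na l` entries of `e` (the nonincreasing union of `d` and `a`, where `a`-entries
are placed before equal `d`-entries) that are bigger than `c_l`, or (b)
`Σ_{i ∈ S, c_i < d_j} c_i ≥ Σ_{i ∉ Δ, i > j} d_i + d_j + Σ_{i=q_j+1}^{s} a_i`.
The dual criterion for `S` is obtained by swapping the roles of the data. -/
def DeltaCond (m s : ℤ) (a c d : ℤ → ℤ) (S Δ : Finset ℤ) (j : ℤ) : Prop :=
  ¬ (qd m s c d S Δ j ≤ s ∧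
      ((∃ l ∈ S, c l < d j ∧ (∀ l' ∈ S, c l' < d j → l ≤ l') ∧
          1 ≤ Na m s a c d S Δ l ∧
          (((Finset.Icc (j + 1) m).filter (fun i => c l < d i)).card : ℤ) +
              (((Finset.Icc (1 : ℤ) s).filter (fun i => c l < a i ∧ a i < d j)).card : ℤ) + 1 ≤
            Na m s a c d S Δ l) ∨
        ((∑ i ∈ (Finset.Icc (j + 1) m).filter (fun i => i ∉ Δ), d i) + d j +
            (∑ i ∈ Finset.Icc (qd m s c d S Δ j + 1) s, a i) ≤
          ∑ i ∈ S.filter (fun i => c i < d j), c i)))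

/-- `t_j = s - (h' - j) + #{i ∉ Δ : d_i < c^j}` for `1 ≤ j ≤ h'`, with
`t_0 = m + s - h - h'` and `t_{h'+1} = s + 1`. -/
def tC (m s h h' : ℤ) (d : ℤ → ℤ) (Δ : Finset ℤ) (C : ℤ → ℤ) (j : ℤ) : ℤ :=
  if j = 0 then m + s - h - h'
  else if j = h' + 1 then s + 1
  else s - (h' - j) + (((Finset.Icc (1 : ℤ) m).filter (fun i => i ∉ Δ ∧ d i < C j)).card : ℤ)

/-- `z_j = #{i : d_i > c^j}` for `1 ≤ j ≤ h'`, with `z_0 = 0` and `z_{h'+1} = m`. -/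
def zC (m h' : ℤ) (d : ℤ → ℤ) (C : ℤ → ℤ) (j : ℤ) : ℤ :=
  if j = 0 then 0
  else if j = h' + 1 then m
  else (((Finset.Icc (1 : ℤ) m).filter (fun i => C j < d i)).card : ℤ)

/-- `m_j = #{i : a_i > c^j}` for `1 ≤ j ≤ h'`, with `m_0 = 0`. -/
def mC (s : ℤ) (a : ℤ → ℤ) (C : ℤ → ℤ) (j : ℤ) : ℤ :=
  if j = 0 then 0 else (((Finset.Icc (1 : ℤ) s).filter (fun i => C j < a i)).card : ℤ)

/-- `w_y = #{i ∉ Δ : c^y > d_i > c^{y+1}}` for `0 ≤ y ≤ h'` (with `c^0 = +∞`,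
`c^{h'+1} = -∞`). -/
def wC (m h' : ℤ) (d : ℤ → ℤ) (Δ : Finset ℤ) (C : ℤ → ℤ) (y : ℤ) : ℤ :=
  (((Finset.Icc (1 : ℤ) m).filter (fun i =>
      i ∉ Δ ∧ (1 ≤ y → d i < C y) ∧ (y + 1 ≤ h' → C (y + 1) < d i))).card : ℤ)

end GenMaj

open GenMaj

lemma card_filter_map_eq {S T : Finset ℤ} {c C : ℤ → ℤ}
    (hv : S.val.map c = T.val.map C) (p : ℤ → Prop) [DecidablePred p] :
    (S.filter (fun i => p (c i))).card = (T.filter (fun q => p (C q))).card := by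
  have h1 : ∀ (F : Finset ℤ) (f : ℤ → ℤ), (F.filter (fun i => p (f i))).card
      = Multiset.card (Multiset.filter p (F.val.map f)) := by
    intro F f
    rw [Multiset.filter_map]
    simp [Finset.filter, Function.comp]
  rw [h1 S c, h1 T C, hv]

lemma sum_filter_map_eq {S T : Finset ℤ} {c C : ℤ → ℤ}
    (hv : S.val.map c = T.val.map C) (p : ℤ → Prop) [DecidablePred p] :
    ∑ i ∈ S.filter (fun i => p (c i)), c i = ∑ q ∈ T.filter (fun q => p (C q)), C q := by
  have h1 : ∀ (F : Finset ℤ) (f : ℤ → ℤ), ∑ i ∈ F.filter (fun i => p (f i)), f i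
      = (Multiset.filter p (F.val.map f)).sum := by
    intro F f
    rw [Multiset.filter_map]
    rw [Finset.sum_eq_multiset_sum]
    simp [Finset.filter, Function.comp]
  rw [h1 S c, h1 T C, hv]

lemma exists_of_mem_map {S T : Finset ℤ} {c C : ℤ → ℤ}
    (hv : S.val.map c = T.val.map C) {q : ℤ} (hq : q ∈ T) : ∃ i ∈ S, c i = C q := by
  have : C q ∈ Multiset.map c S.val := by
    rw [hv]; exact Multiset.mem_map_of_mem _ hq
  obtain ⟨i, hi, h⟩ := Multiset.mem_map.mp this
  exact ⟨i, hi, h⟩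

lemma sum_le_of_counts : ∀ (N : ℕ) (F : Finset ℤ) (f v : ℤ → ℤ),
    F.card = N →
    (∀ q ∈ Finset.Icc (1:ℤ) (N:ℤ), ((F.filter (fun i => f i < v q)).card : ℤ) ≤ (N:ℤ) - q) →
    (∀ i ∈ F, ∀ q ∈ Finset.Icc (1:ℤ) (N:ℤ), f i ≠ v q) →
    (∑ q ∈ Finset.Icc (1:ℤ) (N:ℤ), v q) ≤ ∑ i ∈ F, f i := by
  intro N
  induction N with
  | zero =>
    intro F f v hc _ _
    rw [Finset.card_eq_zero.mp hc]
    simp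
  | succ N ih =>
    intro F f v hc hcount hne
    have h1mem : (1:ℤ) ∈ Finset.Icc (1:ℤ) ((N:ℤ)+1) := by
      rw [Finset.mem_Icc]; omega
    have h1 : ((F.filter (fun i => f i < v 1)).card : ℤ) ≤ (N:ℤ) := by
      have := hcount 1 (by exact_mod_cast h1mem)
      push_cast at this ⊢
      omega
    have hex : ∃ i ∈ F, ¬ (f i < v 1) := by
      by_contra hcon
      push_neg at hcon
      have : F.filter (fun i => f i < v 1) = F := Finset.filter_eq_self.mpr hcon
      rw [this, hc] at h1
      push_cast at h1; omega
    obtain ⟨i0, hi0F, hi0⟩ := hex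
    have hlt : v 1 < f i0 :=
      lt_of_le_of_ne (not_lt.mp hi0) (Ne.symm (hne i0 hi0F 1 (by exact_mod_cast h1mem)))
    set F' := F.erase i0 with hF'
    have hcF' : F'.card = N := by
      rw [hF', Finset.card_erase_of_mem hi0F, hc]
      omega
    have ihh : (∑ q ∈ Finset.Icc (1:ℤ) (N:ℤ), v (q+1)) ≤ ∑ i ∈ F', f i := by
      apply ih F' f (fun q => v (q+1)) hcF'
      · intro q hq
        rw [Finset.mem_Icc] at hq
        have hsub : F'.filter (fun i => f i < v (q+1)) ⊆ F.filter (fun i => f i < v (q+1)) :=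
          Finset.filter_subset_filter _ (Finset.erase_subset _ _)
        have hcle := Finset.card_le_card hsub
        have := hcount (q+1) (by rw [Finset.mem_Icc]; push_cast; omega)
        push_cast at *
        omega
      · intro i hi q hq
        rw [Finset.mem_Icc] at hq
        exact hne i (Finset.mem_of_mem_erase hi) (q+1) (by rw [Finset.mem_Icc]; push_cast; omega)
    have hsplit : ∑ i ∈ F, f i = f i0 + ∑ i ∈ F', f i := (Finset.add_sum_erase F f hi0F).symm
    have hIccsplit : Finset.Icc (1:ℤ) ((N:ℤ)+1) = insert 1 (Finset.Icc (2:ℤ) ((N:ℤ)+1)) := by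
      ext x
      simp only [Finset.mem_Icc, Finset.mem_insert]
      omega
    have himg : Finset.Icc (2:ℤ) ((N:ℤ)+1) = (Finset.Icc (1:ℤ) (N:ℤ)).image (fun x => x + 1) := by
      rw [Finset.image_add_right_Icc]
      norm_num
    have hsum2 : ∑ q ∈ Finset.Icc (2:ℤ) ((N:ℤ)+1), v q = ∑ q ∈ Finset.Icc (1:ℤ) (N:ℤ), v (q+1) := by
      rw [himg, Finset.sum_image (by intro x _ y _ h; exact add_right_cancel h)]
    calc ∑ q ∈ Finset.Icc (1:ℤ) (((N:ℕ)+1 :ℕ):ℤ), v q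
        = v 1 + ∑ q ∈ Finset.Icc (2:ℤ) ((N:ℤ)+1), v q := by
          push_cast
          rw [hIccsplit, Finset.sum_insert (by rw [Finset.mem_Icc]; omega)]
      _ ≤ f i0 + ∑ i ∈ F', f i := by
          rw [hsum2]; exact add_le_add hlt.le ihh
      _ = ∑ i ∈ F, f i := hsplit.symm

lemma sum_lt_of_counts (N : ℕ) (F : Finset ℤ) (f v : ℤ → ℤ) (hN : 1 ≤ N)
    (hc : F.card = N)
    (hcount : ∀ q ∈ Finset.Icc (1:ℤ) (N:ℤ), ((F.filter (fun i => f i < v q)).card : ℤ) ≤ (N:ℤ) - q)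
    (hne : ∀ i ∈ F, ∀ q ∈ Finset.Icc (1:ℤ) (N:ℤ), f i ≠ v q) :
    (∑ q ∈ Finset.Icc (1:ℤ) (N:ℤ), v q) < ∑ i ∈ F, f i := by
  obtain ⟨N', rfl⟩ : ∃ N', N = N' + 1 := ⟨N - 1, by omega⟩
  have h1mem : (1:ℤ) ∈ Finset.Icc (1:ℤ) ((N':ℤ)+1) := by rw [Finset.mem_Icc]; omega
  have h1 : ((F.filter (fun i => f i < v 1)).card : ℤ) ≤ (N':ℤ) := by
    have := hcount 1 (by exact_mod_cast h1mem)
    push_cast at this ⊢; omega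
  have hex : ∃ i ∈ F, ¬ (f i < v 1) := by
    by_contra hcon
    push_neg at hcon
    have : F.filter (fun i => f i < v 1) = F := Finset.filter_eq_self.mpr hcon
    rw [this, hc] at h1; push_cast at h1; omega
  obtain ⟨i0, hi0F, hi0⟩ := hex
  have hlt : v 1 < f i0 :=
    lt_of_le_of_ne (not_lt.mp hi0) (Ne.symm (hne i0 hi0F 1 (by exact_mod_cast h1mem)))
  set F' := F.erase i0 with hF'
  have hcF' : F'.card = N' := by
    rw [hF', Finset.card_erase_of_mem hi0F, hc]
    omega
  have ihh : (∑ q ∈ Finset.Icc (1:ℤ) (N':ℤ), v (q+1)) ≤ ∑ i ∈ F', f i := by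
    apply sum_le_of_counts N' F' f (fun q => v (q+1)) hcF'
    · intro q hq
      rw [Finset.mem_Icc] at hq
      have hsub : F'.filter (fun i => f i < v (q+1)) ⊆ F.filter (fun i => f i < v (q+1)) := by
        rw [hF']
        exact Finset.filter_subset_filter _ (Finset.erase_subset _ _)
      have hcle := Finset.card_le_card hsub
      have := hcount (q+1) (by rw [Finset.mem_Icc]; push_cast; omega)
      push_cast at *
      omega
    · intro i hi q hq
      rw [Finset.mem_Icc] at hq
      exact hne i (Finset.mem_of_mem_erase hi) (q+1) (by rw [Finset.mem_Icc]; push_cast; omega)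
  have hsplit : ∑ i ∈ F, f i = f i0 + ∑ i ∈ F', f i := (Finset.add_sum_erase F f hi0F).symm
  have hIccsplit : Finset.Icc (1:ℤ) ((N':ℤ)+1) = insert 1 (Finset.Icc (2:ℤ) ((N':ℤ)+1)) := by
    ext x
    simp only [Finset.mem_Icc, Finset.mem_insert]
    omega
  have himg : Finset.Icc (2:ℤ) ((N':ℤ)+1) = (Finset.Icc (1:ℤ) (N':ℤ)).image (fun x => x + 1) := by
    rw [Finset.image_add_right_Icc]; norm_num
  have hsum2 : ∑ q ∈ Finset.Icc (2:ℤ) ((N':ℤ)+1), v q = ∑ q ∈ Finset.Icc (1:ℤ) (N':ℤ), v (q+1) := by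
    rw [himg, Finset.sum_image (by intro x _ y _ h; exact add_right_cancel h)]
  calc ∑ q ∈ Finset.Icc (1:ℤ) (((N':ℕ)+1:ℕ):ℤ), v q
      = v 1 + ∑ q ∈ Finset.Icc (2:ℤ) ((N':ℤ)+1), v q := by
        push_cast
        rw [hIccsplit, Finset.sum_insert (by rw [Finset.mem_Icc]; omega)]
    _ < f i0 + ∑ i ∈ F', f i := by
        rw [hsum2]; exact add_lt_add_of_lt_of_le hlt ihh
    _ = ∑ i ∈ F, f i := hsplit.symm

def Tset (m : ℤ) (d C : ℤ → ℤ) (Δ : Finset ℤ) (z : ℤ) : Finset ℤ :=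
  (Finset.Icc (1:ℤ) m).filter (fun i => i ∉ Δ ∧ (1 ≤ z → d i < C z))

lemma Tmem {m : ℤ} {d C : ℤ → ℤ} {Δ : Finset ℤ} {z i : ℤ} :
    i ∈ Tset m d C Δ z ↔ (i ∈ Finset.Icc (1:ℤ) m ∧ (i ∉ Δ ∧ (1 ≤ z → d i < C z))) := by
  unfold Tset
  exact Finset.mem_filter

lemma key (m n s h h' : ℤ) (a c d C : ℤ → ℤ) (S Δ : Finset ℤ)
    (hcmono : AntitoneOn c (Set.Icc 1 n)) (hdmono : AntitoneOn d (Set.Icc 1 m))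
    (hcd : ∀ i ∈ Finset.Icc (1 : ℤ) n, ∀ j ∈ Finset.Icc (1 : ℤ) m, c i ≠ d j)
    (hSsub : S ⊆ Finset.Icc 1 n) (hΔsub : Δ ⊆ Finset.Icc 1 m)
    (hΔdef : ∀ j ∈ Finset.Icc (1 : ℤ) m, (j ∈ Δ ↔ DeltaCond m s a c d S Δ j))
    (hcardΔ : h = (Δ.card : ℤ)) (hcardS : h' = (S.card : ℤ))
    (hCmono : AntitoneOn C (Set.Icc 1 h'))
    (hCval : S.val.map c = (Finset.Icc (1 : ℤ) h').val.map C)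
    (hyp : ext s a s ≤ ext h' C h') :
    ∀ y ∈ Finset.Icc (0 : ℤ) (h' - 1), tC m s h h' d Δ C y < s := by
  intro y hy
  rw [Finset.mem_Icc] at hy
  have hh1 : 1 ≤ h' := by omega
  have hsA : 1 ≤ s ∧ a s ≤ C h' := by
    unfold GenMaj.ext at hyp
    rw [if_neg (by omega : ¬ h' ≤ 0), if_pos le_rfl] at hyp
    by_cases hs : s ≤ 0
    · rw [if_pos hs] at hyp
      exact absurd hyp (by simp)
    · rw [if_neg hs, if_pos le_rfl] at hyp
      exact ⟨by omega, by exact_mod_cast hyp⟩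
  obtain ⟨hs1, hA⟩ := hsA
  -- consequences of j ∉ Δ
  have hQ : ∀ j ∈ Finset.Icc (1:ℤ) m, j ∉ Δ →
      ((((Finset.Icc (j+1) m).filter (fun i => i ∉ Δ)).card : ℤ) + 1
        ≤ ((S.filter (fun i => c i < d j)).card : ℤ)) ∧
      ((∃ l ∈ S, c l < d j ∧ (∀ l' ∈ S, c l' < d j → l ≤ l') ∧
          1 ≤ Na m s a c d S Δ l ∧
          (((Finset.Icc (j + 1) m).filter (fun i => c l < d i)).card : ℤ) +
              (((Finset.Icc (1 : ℤ) s).filter (fun i => c l < a i ∧ a i < d j)).card : ℤ) + 1 ≤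
            Na m s a c d S Δ l) ∨
        ((∑ i ∈ (Finset.Icc (j + 1) m).filter (fun i => i ∉ Δ), d i) + d j +
            (∑ i ∈ Finset.Icc (qd m s c d S Δ j + 1) s, a i) ≤
          ∑ i ∈ S.filter (fun i => c i < d j), c i)) := by
    intro j hj hjΔ
    have h1 : ¬ DeltaCond m s a c d S Δ j := fun hD => hjΔ ((hΔdef j hj).mpr hD)
    rw [DeltaCond, not_not] at h1
    refine ⟨?_, h1.2⟩
    have h2 := h1.1
    unfold qd at h2
    omega
  -- the weak counting bound
  have hF2 : ∀ z, 0 ≤ z → z ≤ h' → ((Tset m d C Δ z).card : ℤ) ≤ h' - z := by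
    intro z hz0 hzh
    rcases Finset.eq_empty_or_nonempty (Tset m d C Δ z) with hT0 | hTne
    · rw [hT0]; simp; omega
    · have hjT : (Tset m d C Δ z).min' hTne ∈ Tset m d C Δ z := Finset.min'_mem _ hTne
      set j := (Tset m d C Δ z).min' hTne with hjdef
      have hjq := Tmem.mp hjT
      rw [Finset.mem_Icc] at hjq
      have hsub1 : (Tset m d C Δ z).erase j ⊆ (Finset.Icc (j+1) m).filter (fun i => i ∉ Δ) := by
        intro i hi
        have hiT := Finset.mem_of_mem_erase hi
        have hine := Finset.ne_of_mem_erase hi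
        have hjle := Finset.min'_le (Tset m d C Δ z) i hiT
        rw [← hjdef] at hjle
        have hiq := Tmem.mp hiT
        rw [Finset.mem_Icc] at hiq
        rw [Finset.mem_filter, Finset.mem_Icc]
        exact ⟨⟨by omega, hiq.1.2⟩, hiq.2.1⟩
      have hcard1 := Finset.card_le_card hsub1
      rw [Finset.card_erase_of_mem hjT] at hcard1
      have hpos : 0 < (Tset m d C Δ z).card := Finset.card_pos.mpr hTne
      have hcS := (hQ j (Finset.mem_Icc.mpr hjq.1) hjq.2.1).1
      have hcG : (S.filter (fun i => c i < d j)).card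
          = ((Finset.Icc (1:ℤ) h').filter (fun q => C q < d j)).card :=
        card_filter_map_eq hCval (fun t => t < d j)
      have hGsub : (Finset.Icc (1:ℤ) h').filter (fun q => C q < d j) ⊆ Finset.Icc (z+1) h' := by
        intro q hq
        rw [Finset.mem_filter, Finset.mem_Icc] at hq
        rw [Finset.mem_Icc]
        refine ⟨?_, hq.1.2⟩
        by_contra hqz
        push_neg at hqz
        have hz1 : 1 ≤ z := by omega
        have hCzq : C z ≤ C q := hCmono (Set.mem_Icc.mpr ⟨hq.1.1, by omega⟩)
          (Set.mem_Icc.mpr ⟨hz1, hzh⟩) (by omega)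
        have hdz := hjq.2.2 hz1
        omega
      have hGcard := Finset.card_le_card hGsub
      rw [Int.card_Icc] at hGcard
      omega
  -- the strict counting bound
  have hClaim : ∀ z, 0 ≤ z → z ≤ h' - 1 → ((Tset m d C Δ z).card : ℤ) ≤ h' - z - 1 := by
    intro z hz0 hzh
    by_contra hge
    push_neg at hge
    have hTcard : ((Tset m d C Δ z).card : ℤ) = h' - z :=
      le_antisymm (hF2 z hz0 (by omega)) (by omega)
    have hTne : (Tset m d C Δ z).Nonempty := by
      rw [← Finset.card_pos]; omega
    have hjT : (Tset m d C Δ z).min' hTne ∈ Tset m d C Δ z := Finset.min'_mem _ hTne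
    set j := (Tset m d C Δ z).min' hTne with hjdef
    have hjq := Tmem.mp hjT
    rw [Finset.mem_Icc] at hjq
    have hjm : j ∈ Finset.Icc (1:ℤ) m := Finset.mem_Icc.mpr hjq.1
    have hsub1 : (Tset m d C Δ z).erase j ⊆ (Finset.Icc (j+1) m).filter (fun i => i ∉ Δ) := by
      intro i hi
      have hiT := Finset.mem_of_mem_erase hi
      have hine := Finset.ne_of_mem_erase hi
      have hjle := Finset.min'_le (Tset m d C Δ z) i hiT
      rw [← hjdef] at hjle
      have hiq := Tmem.mp hiT
      rw [Finset.mem_Icc] at hiq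
      rw [Finset.mem_filter, Finset.mem_Icc]
      exact ⟨⟨by omega, hiq.1.2⟩, hiq.2.1⟩
    have hsub2 : (Finset.Icc (j+1) m).filter (fun i => i ∉ Δ) ⊆ (Tset m d C Δ z).erase j := by
      intro i hi
      rw [Finset.mem_filter, Finset.mem_Icc] at hi
      have hdle : d i ≤ d j := hdmono (Set.mem_Icc.mpr ⟨hjq.1.1, hjq.1.2⟩)
        (Set.mem_Icc.mpr ⟨by omega, hi.1.2⟩) (by omega)
      rw [Finset.mem_erase]
      refine ⟨by omega, ?_⟩
      rw [Tmem, Finset.mem_Icc]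
      exact ⟨⟨by omega, hi.1.2⟩, hi.2, fun hz1 => lt_of_le_of_lt hdle (hjq.2.2 hz1)⟩
    have hAeq : (Finset.Icc (j+1) m).filter (fun i => i ∉ Δ) = (Tset m d C Δ z).erase j :=
      Finset.Subset.antisymm hsub2 hsub1
    have hpos : 0 < (Tset m d C Δ z).card := Finset.card_pos.mpr hTne
    have hAcard : ((((Finset.Icc (j+1) m)).filter (fun i => i ∉ Δ)).card : ℤ) = h' - z - 1 := by
      rw [hAeq, Finset.card_erase_of_mem hjT]
      omega
    have hcG : (S.filter (fun i => c i < d j)).card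
        = ((Finset.Icc (1:ℤ) h').filter (fun q => C q < d j)).card :=
      card_filter_map_eq hCval (fun t => t < d j)
    have hGsub : (Finset.Icc (1:ℤ) h').filter (fun q => C q < d j) ⊆ Finset.Icc (z+1) h' := by
      intro q hq
      rw [Finset.mem_filter, Finset.mem_Icc] at hq
      rw [Finset.mem_Icc]
      refine ⟨?_, hq.1.2⟩
      by_contra hqz
      push_neg at hqz
      have hz1 : 1 ≤ z := by omega
      have hCzq : C z ≤ C q := hCmono (Set.mem_Icc.mpr ⟨hq.1.1, by omega⟩)
        (Set.mem_Icc.mpr ⟨hz1, by omega⟩) (by omega)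
      have hdz := hjq.2.2 hz1
      omega
    have hGcard := Finset.card_le_card hGsub
    rw [Int.card_Icc] at hGcard
    have hcS_le := (hQ j hjm hjq.2.1).1
    have hcS_eq : ((S.filter (fun i => c i < d j)).card : ℤ) = h' - z := by omega
    have hGeq : (Finset.Icc (1:ℤ) h').filter (fun q => C q < d j) = Finset.Icc (z+1) h' := by
      apply Finset.eq_of_subset_of_card_le hGsub
      rw [Int.card_Icc]
      omega
    have hqd : qd m s c d S Δ j = s := by
      unfold qd
      omega
    rcases (hQ j hjm hjq.2.1).2 with hcaseA | hcaseB
    · -- case (a)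
      obtain ⟨l, hlS, hlcd, hlmin, hNa1, hNale⟩ := hcaseA
      have hln := hSsub hlS
      rw [Finset.mem_Icc] at hln
      have hclC : a s ≤ c l := by
        have hmem : c l ∈ Multiset.map C (Finset.Icc (1:ℤ) h').val := by
          rw [← hCval]; exact Multiset.mem_map_of_mem _ hlS
        obtain ⟨q0, hq0, hq0e⟩ := Multiset.mem_map.mp hmem
        have hq0m : q0 ∈ Finset.Icc (1:ℤ) h' := hq0
        rw [Finset.mem_Icc] at hq0m
        have hCle : C h' ≤ C q0 := hCmono (Set.mem_Icc.mpr ⟨hq0m.1, hq0m.2⟩)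
          (Set.mem_Icc.mpr ⟨hh1, le_rfl⟩) hq0m.2
        omega
      have hSfe : S.filter (fun i => c i < d j) = insert l (S.filter (fun i => l < i)) := by
        ext i
        simp only [Finset.mem_filter, Finset.mem_insert]
        constructor
        · rintro ⟨hiS, hic⟩
          rcases eq_or_lt_of_le (hlmin i hiS hic) with he | hlt'
          · exact Or.inl he.symm
          · exact Or.inr ⟨hiS, hlt'⟩
        · rintro (rfl | ⟨hiS, hli⟩)
          · exact ⟨hlS, hlcd⟩
          · refine ⟨hiS, lt_of_le_of_lt ?_ hlcd⟩
            have hin := hSsub hiS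
            rw [Finset.mem_Icc] at hin
            exact hcmono (Set.mem_Icc.mpr ⟨hln.1, hln.2⟩) (Set.mem_Icc.mpr ⟨hin.1, hin.2⟩) hli.le
      have hlnotin : l ∉ S.filter (fun i => l < i) := by simp
      have hSG : ((S.filter (fun i => l < i)).card : ℤ) = h' - z - 1 := by
        have hcc := congrArg Finset.card hSfe
        rw [Finset.card_insert_of_notMem hlnotin] at hcc
        omega
      have hMa : (((Finset.Icc (1:ℤ) s).filter (fun i => c l < a i)).card : ℤ) ≤ s - 1 := by
        have hsub : (Finset.Icc (1:ℤ) s).filter (fun i => c l < a i)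
            ⊆ (Finset.Icc (1:ℤ) s).erase s := by
          intro i hi
          rw [Finset.mem_filter] at hi
          rw [Finset.mem_erase]
          refine ⟨?_, hi.1⟩
          rintro rfl
          omega
        have h2 := Finset.card_le_card hsub
        rw [Finset.card_erase_of_mem (by rw [Finset.mem_Icc]; omega)] at h2
        rw [Int.card_Icc] at h2
        omega
      have hAAsplit : (((Finset.Icc (j+1) m).filter (fun i => i ∉ Δ)).card : ℤ)
          ≤ (((Finset.Icc (j+1) m).filter (fun i => c l < d i)).card : ℤ)
            + (((Finset.Icc (1:ℤ) m).filter (fun i => i ∉ Δ ∧ d i < c l)).card : ℤ) := by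
        have hsub : (Finset.Icc (j+1) m).filter (fun i => i ∉ Δ)
            ⊆ ((Finset.Icc (j+1) m).filter (fun i => c l < d i))
              ∪ ((Finset.Icc (1:ℤ) m).filter (fun i => i ∉ Δ ∧ d i < c l)) := by
          intro i hi
          rw [Finset.mem_filter, Finset.mem_Icc] at hi
          have hnecd : c l ≠ d i := hcd l (by rw [Finset.mem_Icc]; omega) i
            (by rw [Finset.mem_Icc]; omega)
          rw [Finset.mem_union, Finset.mem_filter, Finset.mem_filter, Finset.mem_Icc,
            Finset.mem_Icc]
          rcases lt_or_gt_of_ne hnecd with h1 | h1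
          · exact Or.inl ⟨⟨hi.1.1, hi.1.2⟩, h1⟩
          · exact Or.inr ⟨⟨by omega, hi.1.2⟩, hi.2, h1⟩
        have hc1 := Finset.card_le_card hsub
        have hc2 := Finset.card_union_le ((Finset.Icc (j+1) m).filter (fun i => c l < d i))
          ((Finset.Icc (1:ℤ) m).filter (fun i => i ∉ Δ ∧ d i < c l))
        omega
      unfold Na at hNale
      omega
    · -- case (b)
      rw [hqd] at hcaseB
      rw [Finset.Icc_eq_empty (by omega : ¬ (s+1 ≤ s)), Finset.sum_empty, add_zero] at hcaseB
      have hsumS : ∑ i ∈ S.filter (fun i => c i < d j), c i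
          = ∑ q ∈ Finset.Icc (z+1) h', C q := by
        rw [sum_filter_map_eq hCval (fun t => t < d j), hGeq]
      have hsumT : (∑ i ∈ (Finset.Icc (j+1) m).filter (fun i => i ∉ Δ), d i) + d j
          = ∑ i ∈ Tset m d C Δ z, d i := by
        rw [hAeq]
        exact Finset.sum_erase_add _ _ hjT
      have hNz : (((h' - z).toNat : ℤ)) = h' - z := by omega
      have hstrict : (∑ q ∈ Finset.Icc (1:ℤ) (((h'-z).toNat : ℕ):ℤ), C (z+q))
          < ∑ i ∈ Tset m d C Δ z, d i := by
        apply sum_lt_of_counts ((h'-z).toNat) (Tset m d C Δ z) d (fun q => C (z+q))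
          (by omega) (by omega)
        · intro q hq
          rw [Finset.mem_Icc] at hq
          have hTeq : (Tset m d C Δ z).filter (fun i => d i < C (z+q)) = Tset m d C Δ (z+q) := by
            ext i
            rw [Finset.mem_filter, Tmem, Tmem]
            constructor
            · rintro ⟨⟨him, hiΔ, _⟩, hdi⟩
              exact ⟨him, hiΔ, fun _ => hdi⟩
            · rintro ⟨him, hiΔ, hdi⟩
              have hdi' := hdi (by omega)
              refine ⟨⟨him, hiΔ, fun hz1 => ?_⟩, hdi'⟩
              have hCle : C (z+q) ≤ C z := hCmono (Set.mem_Icc.mpr ⟨hz1, by omega⟩)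
                (Set.mem_Icc.mpr ⟨by omega, by omega⟩) (by omega)
              omega
          rw [hTeq]
          have := hF2 (z+q) (by omega) (by omega)
          omega
        · intro i hi q hq
          rw [Finset.mem_Icc] at hq
          obtain ⟨i0, hi0S, hi0e⟩ := exists_of_mem_map hCval
            (q := z+q) (by rw [Finset.mem_Icc]; omega)
          have hi0n := hSsub hi0S
          have hiq := Tmem.mp hi
          have hne2 : c i0 ≠ d i := hcd i0 hi0n i hiq.1
          rw [hi0e] at hne2
          exact fun hcon => hne2 hcon.symm
      have hreindex : ∑ q ∈ Finset.Icc (1:ℤ) (((h'-z).toNat : ℕ):ℤ), C (z+q)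
          = ∑ p ∈ Finset.Icc (z+1) h', C p := by
        rw [show Finset.Icc (z+1) h'
            = (Finset.Icc (1:ℤ) (((h'-z).toNat : ℕ):ℤ)).image (fun x => x + z) by
          rw [Finset.image_add_right_Icc]
          congr 1 <;> omega]
        rw [Finset.sum_image (by intro x _ y _ hxy; exact add_right_cancel hxy)]
        exact Finset.sum_congr rfl (fun x _ => by rw [Int.add_comm])
      rw [hsumS, ← hreindex] at hcaseB
      rw [hsumT] at hcaseB
      exact absurd hcaseB (not_le.mpr hstrict)
  -- conclude
  rcases eq_or_lt_of_le hy.1 with hy0 | hy1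
  · subst hy0
    have hc0 := hClaim 0 le_rfl (by omega)
    have hT0eq : Tset m d C Δ 0 = Finset.Icc (1:ℤ) m \ Δ := by
      ext i
      rw [Tmem, Finset.mem_sdiff]
      constructor
      · rintro ⟨h1, h2, _⟩
        exact ⟨h1, h2⟩
      · rintro ⟨h1, h2⟩
        exact ⟨h1, h2, fun hcon => absurd hcon (by norm_num)⟩
    have hsd : (Finset.Icc (1:ℤ) m \ Δ).card = (Finset.Icc (1:ℤ) m).card - Δ.card :=
      Finset.card_sdiff_of_subset hΔsub
    have hle2 := Finset.card_le_card hΔsub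
    have hIc : (Finset.Icc (1:ℤ) m).card = (m + 1 - 1).toNat := Int.card_Icc 1 m
    rw [hT0eq] at hc0
    unfold tC
    rw [if_pos rfl]
    omega
  · unfold tC
    rw [if_neg (by omega), if_neg (by omega)]
    have hfe : (Finset.Icc (1:ℤ) m).filter (fun i => i ∉ Δ ∧ d i < C y) = Tset m d C Δ y := by
      ext i
      rw [Finset.mem_filter, Tmem]
      constructor
      · rintro ⟨h1, h2, h3⟩
        exact ⟨h1, h2, fun _ => h3⟩
      · rintro ⟨h1, h2, h3⟩
        exact ⟨h1, h2, h3 (by omega)⟩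
    rw [hfe]
    have := hClaim y (by omega) hy.2
    omega

/-- Corollary: `c^{h'} ≥ a_s` implies `t_y < s` for `y = 0,…,h'-1`, and `d^h ≥ b_k` implies `t'_x < k` for `x = 0,…,h-1`. -/
theorem statement13
    (m n s k : ℤ) (hm : 0 ≤ m) (hn : 0 ≤ n) (hs : 0 ≤ s) (hk : 0 ≤ k)
    (hmnsk : m + s = n + k)
    (a b c d : ℤ → ℤ)
    (ha : AntitoneOn a (Set.Icc 1 s)) (hb : AntitoneOn b (Set.Icc 1 k))
    (hcmono : AntitoneOn c (Set.Icc 1 n)) (hdmono : AntitoneOn d (Set.Icc 1 m))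
    (hcd : ∀ i ∈ Finset.Icc (1 : ℤ) n, ∀ j ∈ Finset.Icc (1 : ℤ) m, c i ≠ d j)
    (S Δ : Finset ℤ) (hSsub : S ⊆ Finset.Icc 1 n) (hΔsub : Δ ⊆ Finset.Icc 1 m)
    (hSdef : ∀ j ∈ Finset.Icc (1 : ℤ) n, (j ∈ S ↔ DeltaCond n k b d c Δ S j))
    (hΔdef : ∀ j ∈ Finset.Icc (1 : ℤ) m, (j ∈ Δ ↔ DeltaCond m s a c d S Δ j))
    (h h' : ℤ) (hcardΔ : h = (Δ.card : ℤ)) (hcardS : h' = (S.card : ℤ))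
    (D C : ℤ → ℤ)
    (hDmono : AntitoneOn D (Set.Icc 1 h))
    (hDval : Δ.val.map d = (Finset.Icc (1 : ℤ) h).val.map D)
    (hCmono : AntitoneOn C (Set.Icc 1 h'))
    (hCval : S.val.map c = (Finset.Icc (1 : ℤ) h').val.map C)
    :
    (ext s a s ≤ ext h' C h' →
        ∀ y ∈ Finset.Icc (0 : ℤ) (h' - 1), tC m s h h' d Δ C y < s) ∧
    (ext k b k ≤ ext h D h →
        ∀ x ∈ Finset.Icc (0 : ℤ) (h - 1), tC n k h' h c S D x < k) := by
  constructor
  · intro hyp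
    exact key m n s h h' a c d C S Δ hcmono hdmono hcd hSsub hΔsub hΔdef hcardΔ
      hcardS hCmono hCval hyp
  · intro hyp
    exact key n m k h' h b d c D Δ S hdmono hcmono (fun i hi j hj => (hcd j hj i hi).symm)
      hΔsub hSsub hSdef hcardS hcardΔ hDmono hDval hyp
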